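/- Let p be an odd prime, (a_1,…,a_{p−1}) a strongly carefree tuple with m = ∏_{i=1}^{p−1} a_i^i > 1, K = ℚ(α) with α the real p-th root of m, and γ_j = α^j / ∏_{i=1}^{p−1} a_i^{⌊ij/p⌋} for 1 ≤ j ≤ p−1, with γ_0 = 1. Then for all 0 ≤ i, j ≤ p−1, the sum over all p field embeddings σ : K → ℂ of σ(γ_i)·conj(σ(γ_j)) equals p·γ_i² when i = j, and equals 0 when i ≠ j. In particular, the Gram matrix of the basis {1, γ_1, …, γ_{p−1}} under the Minkowski embedding is the diagonal matrix diag(p, pγ_1², pγ_2², …, pγ_{p−1}²). -/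

import Mathlib

open Finset Polynomial

/-- A tuple `(a 1, …, a (p-1))` of positive integers is *strongly carefree* if each `a i`
is squarefree and the `a i` are pairwise coprime. -/
def StronglyCarefree (p : ℕ) (a : ℕ → ℕ) : Prop :=
  (∀ i ∈ Finset.Icc 1 (p - 1), 0 < a i ∧ Squarefree (a i)) ∧
  (∀ i ∈ Finset.Icc 1 (p - 1), ∀ j ∈ Finset.Icc 1 (p - 1), i ≠ j → Nat.Coprime (a i) (a j))

lemma sc_not_pow (p : ℕ) (hp : p.Prime) (a : ℕ → ℕ)
    (ha : StronglyCarefree p a) (m : ℕ)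
    (hm : m = ∏ i ∈ Finset.Icc 1 (p - 1), a i ^ i) (hm1 : 1 < m) :
    ∀ b : ℚ, b ^ p ≠ (m : ℚ) := by
  intro b hb
  have hm0 : m ≠ 0 := by omega
  -- extract a natural p-th root n with n ^ p = m
  have hden : b.den = 1 := by
    have h1 : b.den ^ p = 1 := by
      have := congrArg Rat.den hb
      simpa [Rat.den_pow] using this
    exact (pow_eq_one_iff.mp h1).resolve_right hp.ne_zero
  have hnum : b.num ^ p = (m : ℤ) := by
    have := congrArg Rat.num hb
    simpa [Rat.num_pow] using this
  set n : ℕ := b.num.natAbs with hn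
  have hnp : n ^ p = m := by
    have : ((n ^ p : ℕ) : ℤ) = ((m : ℕ) : ℤ) := by
      push_cast
      rw [hn, ← Int.abs_eq_natAbs, ← abs_pow, hnum]
      simp
    exact_mod_cast this
  -- pick a prime divisor q of m
  set q := m.minFac with hq
  have hqp : q.Prime := Nat.minFac_prime (by omega)
  have hqm : q ∣ m := Nat.minFac_dvd m
  obtain ⟨i0, hi0, hqd⟩ : ∃ i ∈ Finset.Icc 1 (p - 1), q ∣ a i ^ i :=
    hqp.prime.exists_mem_finset_dvd (hm ▸ hqm)
  have hqa : q ∣ a i0 := hqp.dvd_of_dvd_pow hqd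
  have hane : ∀ i ∈ Finset.Icc 1 (p - 1), a i ^ i ≠ 0 := fun i hi =>
    pow_ne_zero _ (ha.1 i hi).1.ne'
  -- compute the q-adic valuation of m
  have hfact : m.factorization q = i0 := by
    rw [hm, Nat.factorization_prod hane]
    rw [Finsupp.finset_sum_apply]
    rw [Finset.sum_eq_single i0]
    · rw [Nat.factorization_pow, Finsupp.smul_apply, smul_eq_mul]
      have h1 : (a i0).factorization q ≤ 1 :=
        Squarefree.natFactorization_le_one q (ha.1 i0 hi0).2
      have h2 : 0 < (a i0).factorization q :=
        hqp.factorization_pos_of_dvd (ha.1 i0 hi0).1.ne' hqa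
      have h3 : (a i0).factorization q = 1 := le_antisymm h1 h2
      rw [h3, mul_one]
    · intro i hi hne
      rw [Nat.factorization_pow, Finsupp.smul_apply, smul_eq_mul]
      have : ¬ q ∣ a i := by
        intro hdvd
        have hcop := ha.2 i hi i0 hi0 hne
        have : q ∣ Nat.gcd (a i) (a i0) := Nat.dvd_gcd hdvd hqa
        rw [hcop] at this
        exact absurd (Nat.eq_one_of_dvd_one this) hqp.one_lt.ne'
      rw [Nat.factorization_eq_zero_of_not_dvd this, mul_zero]
    · intro h; exact absurd hi0 h
  -- but it must be divisible by p
  have hdvd : p ∣ m.factorization q := by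
    rw [← hnp, Nat.factorization_pow, Finsupp.smul_apply, smul_eq_mul]
    exact Dvd.intro _ rfl
  rw [hfact] at hdvd
  simp only [Finset.mem_Icc] at hi0
  have := Nat.le_of_dvd (by omega) hdvd
  omega

/-- For the basis `{1 = γ 0, γ 1, …, γ (p−1)}` of a pure prime degree field `K = ℚ(α)`,
the Hermitian inner products over all `p` complex embeddings are
`∑_σ σ(γ i)·conj(σ(γ j)) = p·γ i ^ 2` if `i = j` and `0` otherwise; i.e. the Gram matrix
under the Minkowski embedding is `diag(p, p γ₁², …, p γ_{p−1}²)`. -/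
theorem gram_matrix_pure_prime_degree_wild
    (p : ℕ) (hp : p.Prime) (hodd : Odd p)
    (a : ℕ → ℕ) (ha : StronglyCarefree p a)
    (m : ℕ) (hm : m = ∏ i ∈ Finset.Icc 1 (p - 1), a i ^ i) (hm1 : 1 < m)
    (α : ℝ) (hαpos : 0 < α) (hαp : α ^ p = (m : ℝ))
    (γ : ℕ → ℝ)
    (hγ : ∀ j, γ j = α ^ j / ∏ i ∈ Finset.Icc 1 (p - 1), (a i : ℝ) ^ (i * j / p))
    (K : IntermediateField ℚ ℝ) [NumberField K]
    (hK : K = IntermediateField.adjoin ℚ {α})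
    (hγK : ∀ j, γ j ∈ K) :
    ∀ i j : Fin p,
      ∑ σ : K →+* ℂ,
          σ ⟨γ (i : ℕ), hγK i⟩ * (starRingEnd ℂ) (σ ⟨γ (j : ℕ), hγK j⟩) =
        if i = j then (p : ℂ) * ((γ (i : ℕ) : ℝ) : ℂ) ^ 2 else 0 := by
  subst hK
  intro i j
  haveI : NeZero p := ⟨hp.ne_zero⟩
  have hα0 : α ≠ 0 := hαpos.ne'
  have hint : IsIntegral ℚ α := by
    refine ⟨X ^ p - C (m : ℚ), monic_X_pow_sub_C _ hp.ne_zero, ?_⟩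
    simp [hαp]
  have hirr : Irreducible (X ^ p - C (m : ℚ)) :=
    X_pow_sub_C_irreducible_of_prime hp (sc_not_pow p hp a ha m hm hm1)
  have h0 : Polynomial.aeval α (X ^ p - C (m : ℚ)) = 0 := by simp [hαp]
  have hmin : minpoly ℚ α = X ^ p - C (m : ℚ) :=
    (minpoly.eq_of_irreducible_of_monic hirr h0 (monic_X_pow_sub_C _ hp.ne_zero)).symm
  set K : IntermediateField ℚ ℝ := IntermediateField.adjoin ℚ {α} with hKdef
  have hrank : Module.finrank ℚ K = p := by
    rw [IntermediateField.adjoin.finrank hint, hmin, natDegree_X_pow_sub_C]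
  have hcard : Fintype.card (K →+* ℂ) = p := by
    rw [NumberField.Embeddings.card K ℂ, hrank]
  -- the generator
  set β : K := IntermediateField.AdjoinSimple.gen ℚ α with hβdef
  have hβcoe : (β : ℝ) = α := rfl
  have hβp : β ^ p = (m : K) := by
    apply Subtype.coe_injective
    push_cast
    rw [hβcoe, hαp]
  -- primitive root
  obtain ⟨ζ, hζ⟩ : ∃ ζ : ℂ, IsPrimitiveRoot ζ p := ⟨_, Complex.isPrimitiveRoot_exp p hp.ne_zero⟩
  have hζ0 : ζ ≠ 0 := hζ.ne_zero hp.ne_zero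
  have hαpC : ((α : ℂ)) ^ p = (m : ℂ) := by
    exact_mod_cast congrArg (fun x : ℝ => (x : ℂ)) hαp
  have hαC0 : (α : ℂ) ≠ 0 := by exact_mod_cast hα0
  -- each embedding sends β to α ζ^k
  have hu : ∀ σ : K →+* ℂ, ∃ k, k < p ∧ ζ ^ k = σ β / (α : ℂ) := by
    intro σ
    have h1 : (σ β) ^ p = (m : ℂ) := by
      rw [← map_pow, hβp, map_natCast]
    have h2 : (σ β / (α : ℂ)) ^ p = 1 := by
      rw [div_pow, h1, hαpC, div_self (Nat.cast_ne_zero.mpr (by omega : m ≠ 0))]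
    obtain ⟨k, hk, hke⟩ := hζ.eq_pow_of_pow_eq_one h2
    exact ⟨k, hk, hke⟩
  choose c hc1 hc2 using hu
  have hσβ : ∀ σ : K →+* ℂ, σ β = (α : ℂ) * ζ ^ c σ := by
    intro σ
    rw [hc2 σ, mul_div_cancel₀ _ hαC0]
  -- injectivity
  have hinj : Function.Injective (fun σ : K →+* ℂ => (⟨c σ, hc1 σ⟩ : Fin p)) := by
    intro σ τ h
    simp only [Fin.mk.injEq] at h
    have hβeq : σ β = τ β := by rw [hσβ, hσβ, h]
    have h2 : σ.toRatAlgHom = τ.toRatAlgHom :=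
      PowerBasis.algHom_ext (IntermediateField.adjoin.powerBasis hint) hβeq
    exact RingHom.ext fun x => congrFun (congrArg DFunLike.coe h2) x
  have hbij : Function.Bijective (fun σ : K →+* ℂ => (⟨c σ, hc1 σ⟩ : Fin p)) :=
    (Fintype.bijective_iff_injective_and_card _).2 ⟨hinj, by rw [hcard, Fintype.card_fin]⟩
  -- conjugation of the root of unity
  have hζconj : (starRingEnd ℂ) ζ = ζ⁻¹ :=
    (Complex.inv_eq_conj (Complex.norm_eq_one_of_pow_eq_one hζ.pow_eq_one hp.ne_zero)).symm
  -- the rational denominators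
  set N : ℕ → ℕ := fun n => ∏ l ∈ Finset.Icc 1 (p - 1), a l ^ (l * n / p) with hNdef
  have hN0R : ∀ n, (N n : ℝ) ≠ 0 := by
    intro n
    exact Nat.cast_ne_zero.mpr (Finset.prod_ne_zero_iff.mpr
      fun l hl => pow_ne_zero _ (ha.1 l hl).1.ne')
  have hN0 : ∀ n, (N n : ℂ) ≠ 0 := fun n => Nat.cast_ne_zero.mpr (by
    exact_mod_cast fun h => hN0R n (by exact_mod_cast congrArg (Nat.cast : ℕ → ℝ) h))
  have hγN : ∀ n, γ n * (N n : ℝ) = α ^ n := by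
    intro n
    rw [hγ n, hNdef]
    push_cast
    rw [div_mul_cancel₀]
    exact Finset.prod_ne_zero_iff.mpr
      fun l hl => pow_ne_zero _ (Nat.cast_ne_zero.mpr (ha.1 l hl).1.ne')
  have hγC : ∀ n, ((γ n : ℝ) : ℂ) = (α : ℂ) ^ n / (N n : ℂ) := by
    intro n
    have h1 : γ n = α ^ n / (N n : ℝ) := by
      rw [eq_div_iff (hN0R n)]; exact hγN n
    rw [h1]
    push_cast
    ring
  -- embeddings on the γ's
  have hgN : ∀ n (hn : γ n ∈ K), (⟨γ n, hn⟩ : K) * (N n : K) = β ^ n := by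
    intro n hn
    apply Subtype.coe_injective
    push_cast
    rw [hβcoe]
    exact hγN n
  have hσg : ∀ (σ : K →+* ℂ) n (hn : γ n ∈ K),
      σ ⟨γ n, hn⟩ = σ β ^ n / (N n : ℂ) := by
    intro σ n hn
    rw [eq_div_iff (hN0 n)]
    have := congrArg σ (hgN n hn)
    rwa [map_mul, map_natCast, map_pow] at this
  -- the key term computation
  have hterm : ∀ σ : K →+* ℂ,
      σ ⟨γ (i : ℕ), hγK i⟩ * (starRingEnd ℂ) (σ ⟨γ (j : ℕ), hγK j⟩)
        = ((γ (i : ℕ) * γ (j : ℕ) : ℝ) : ℂ) * (ζ ^ (i : ℕ) * (ζ ^ (j : ℕ))⁻¹) ^ c σ := by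
    intro σ
    rw [hσg σ _ (hγK i), hσg σ _ (hγK j), hσβ σ]
    rw [map_div₀, map_pow, map_mul, Complex.conj_ofReal, map_pow, hζconj, map_natCast]
    push_cast
    rw [hγC, hγC]
    have hζc0 : ζ ^ c σ ≠ 0 := pow_ne_zero _ hζ0
    field_simp
    ring
  rw [Finset.sum_congr rfl (fun σ _ => hterm σ), ← Finset.mul_sum]
  have hsum : ∑ σ : K →+* ℂ, (ζ ^ (i : ℕ) * (ζ ^ (j : ℕ))⁻¹) ^ c σ
      = ∑ k ∈ Finset.range p, (ζ ^ (i : ℕ) * (ζ ^ (j : ℕ))⁻¹) ^ k := by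
    rw [← Fin.sum_univ_eq_sum_range]
    exact hbij.sum_comp (fun k : Fin p => (ζ ^ (i : ℕ) * (ζ ^ (j : ℕ))⁻¹) ^ (k : ℕ))
  rw [hsum]
  by_cases hij : i = j
  · subst hij
    rw [if_pos rfl, mul_inv_cancel₀ (pow_ne_zero _ hζ0)]
    simp only [one_pow, Finset.sum_const, Finset.card_range, nsmul_eq_mul, mul_one]
    push_cast
    ring
  · rw [if_neg hij]
    have hw1 : ζ ^ (i : ℕ) * (ζ ^ (j : ℕ))⁻¹ ≠ 1 := by
      intro h
      rw [mul_inv_eq_one₀ (pow_ne_zero _ hζ0)] at h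
      exact hij (Fin.ext (hζ.pow_inj i.isLt j.isLt h))
    have hwp : (ζ ^ (i : ℕ) * (ζ ^ (j : ℕ))⁻¹) ^ p = 1 := by
      rw [mul_pow, inv_pow, ← pow_mul, ← pow_mul, mul_comm (i : ℕ) p, mul_comm (j : ℕ) p,
        pow_mul, pow_mul, hζ.pow_eq_one, one_pow, one_pow, inv_one, mul_one]
    rw [geom_sum_eq hw1, hwp, sub_self, zero_div, mul_zero]
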